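/- Set r = max_{x∈V} ( tanh(β q_x / 2) + ∑_{y∈V} tanh(β |J_{x,y}| / 2) ) and suppose r < 1. Then for all spin configurations σ, τ ∈ {-1,+1}^V and every t ∈ ℕ, the t-step distributions of the SCA satisfy ‖(P^{SCA}_{β,q})^t(σ,·) − (P^{SCA}_{β,q})^t(τ,·)‖_TV ≤ r^t · |V|, where ‖μ−ν‖_TV = (1/2) ∑_{η ∈ {-1,+1}^V} |μ(η) − ν(η)| is the total variation distance. -/

import Mathlib

open Real Finset

variable {V : Type*}

/-- The real value of a Boolean spin: `true ↦ +1`, `false ↦ -1`. -/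
def sp (b : Bool) : ℝ := if b then 1 else -1

/-- The cavity field `h̃_x(σ) = ∑_y J_{x,y} σ_y + h_x`. -/
noncomputable def cavity [Fintype V] (J : V → V → ℝ) (h : V → ℝ) (σ : V → Bool) (x : V) : ℝ :=
  (∑ y, J x y * sp (σ y)) + h x

/-- The SCA transition kernel
`P^{SCA}_{β,q}(σ,τ) = ∏_{x∈V} e^{(β/2)(h̃_x(σ)+q_x σ_x) τ_x} / (2 cosh((β/2)(h̃_x(σ)+q_x σ_x)))`. -/
noncomputable def Psca [Fintype V] (J : V → V → ℝ) (h : V → ℝ) (β : ℝ) (q : V → ℝ)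
    (σ τ : V → Bool) : ℝ :=
  ∏ x, Real.exp ((β / 2) * (cavity J h σ x + q x * sp (σ x)) * sp (τ x)) /
    (2 * Real.cosh ((β / 2) * (cavity J h σ x + q x * sp (σ x))))

/-- The t-fold product (t-step transition probabilities) of a kernel P on configurations. -/
noncomputable def kpow [Fintype V] [DecidableEq V]
    (P : (V → Bool) → (V → Bool) → ℝ) : ℕ → (V → Bool) → (V → Bool) → ℝ
  | 0 => fun σ τ => if σ = τ then 1 else 0
  | n + 1 => fun σ τ => ∑ η, P σ η * kpow P n η τ

/-- Total variation distance `‖μ−ν‖_TV = (1/2) ∑_η |μ(η) − ν(η)|`. -/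
noncomputable def tvDist [Fintype V] [DecidableEq V] (μ ν : (V → Bool) → ℝ) : ℝ :=
  (1 / 2) * ∑ η, |μ η - ν η|


lemma mytanh_nonneg {x : ℝ} (hx : 0 ≤ x) : 0 ≤ Real.tanh x := by
  rw [Real.tanh_eq_sinh_div_cosh]
  exact div_nonneg (Real.sinh_nonneg_iff.2 hx) (Real.cosh_pos x).le

lemma mytanh_sub (a b : ℝ) :
    Real.tanh a - Real.tanh b = Real.sinh (a - b) / (Real.cosh a * Real.cosh b) := by
  rw [Real.tanh_eq_sinh_div_cosh, Real.tanh_eq_sinh_div_cosh, Real.sinh_sub,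
    div_sub_div _ _ (Real.cosh_pos a).ne' (Real.cosh_pos b).ne']

lemma mytanh_mono {a b : ℝ} (hab : a ≤ b) : Real.tanh a ≤ Real.tanh b := by
  have := mytanh_sub b a
  nlinarith [Real.sinh_nonneg_iff.2 (sub_nonneg.2 hab), Real.cosh_pos a, Real.cosh_pos b,
    mul_pos (Real.cosh_pos b) (Real.cosh_pos a),
    div_nonneg (Real.sinh_nonneg_iff.2 (sub_nonneg.2 hab)) (mul_pos (Real.cosh_pos b) (Real.cosh_pos a)).le]

lemma mysinh_abs (x : ℝ) : |Real.sinh x| = Real.sinh |x| := by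
  rcases le_or_gt 0 x with hx | hx
  · rw [abs_of_nonneg (Real.sinh_nonneg_iff.2 hx), abs_of_nonneg hx]
  · rw [abs_of_neg hx, abs_of_neg (by simpa using Real.sinh_lt_sinh.2 hx), Real.sinh_neg]

lemma mytanh_diff (a b : ℝ) : |Real.tanh a - Real.tanh b| ≤ 2 * Real.tanh (|a - b| / 2) := by
  set u := |a - b| / 2 with hu
  have hu0 : 0 ≤ u := by positivity
  have h2u : |a - b| = 2 * u := by rw [hu]; ring
  have hD : Real.cosh a * Real.cosh b = (Real.cosh (a + b) + Real.cosh (a - b)) / 2 := by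
    rw [Real.cosh_add, Real.cosh_sub]; ring
  have hcab : Real.cosh (a - b) = Real.cosh (2 * u) := by
    rw [← h2u, Real.cosh_abs]
  have hDl : Real.cosh u ^ 2 ≤ Real.cosh a * Real.cosh b := by
    rw [hD, hcab, Real.cosh_two_mul]
    nlinarith [Real.one_le_cosh (a + b), Real.cosh_sq' u]
  have hnum : |Real.sinh (a - b)| = 2 * Real.sinh u * Real.cosh u := by
    rw [mysinh_abs, h2u, Real.sinh_two_mul]
  rw [mytanh_sub, abs_div, abs_of_pos (mul_pos (Real.cosh_pos a) (Real.cosh_pos b)), hnum,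
    Real.tanh_eq_sinh_div_cosh]
  rw [div_le_iff₀ (mul_pos (Real.cosh_pos a) (Real.cosh_pos b))]
  have hsu : 0 ≤ Real.sinh u := Real.sinh_nonneg_iff.2 hu0
  have hcu : 0 < Real.cosh u := Real.cosh_pos u
  have heq : 2 * (Real.sinh u / Real.cosh u) * (Real.cosh a * Real.cosh b)
      = 2 * Real.sinh u * (Real.cosh a * Real.cosh b) / Real.cosh u := by ring
  rw [heq, le_div_iff₀ hcu]
  nlinarith [mul_le_mul_of_nonneg_left hDl (mul_nonneg hsu (le_of_lt hcu))]

lemma mytanh_subadd {u v : ℝ} (hu : 0 ≤ u) (hv : 0 ≤ v) :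
    Real.tanh (u + v) ≤ Real.tanh u + Real.tanh v := by
  have hsu := Real.sinh_nonneg_iff.2 hu
  have hsv := Real.sinh_nonneg_iff.2 hv
  have hcu := Real.cosh_pos u
  have hcv := Real.cosh_pos v
  have h1 : Real.tanh (u + v) = (Real.sinh u * Real.cosh v + Real.cosh u * Real.sinh v) /
      (Real.cosh u * Real.cosh v + Real.sinh u * Real.sinh v) := by
    rw [Real.tanh_eq_sinh_div_cosh, Real.sinh_add, Real.cosh_add]
  have h2 : Real.tanh u + Real.tanh v = (Real.sinh u * Real.cosh v + Real.cosh u * Real.sinh v) /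
      (Real.cosh u * Real.cosh v) := by
    rw [Real.tanh_eq_sinh_div_cosh, Real.tanh_eq_sinh_div_cosh,
      div_add_div _ _ hcu.ne' hcv.ne']
  rw [h1, h2]
  apply div_le_div_of_nonneg_left _ (mul_pos hcu hcv) _
  · positivity
  · nlinarith

/-- auxiliary: the local field argument. -/
noncomputable def aa [Fintype V] (J : V → V → ℝ) (h : V → ℝ) (β : ℝ) (q : V → ℝ)
    (σ : V → Bool) (x : V) : ℝ := (β / 2) * (cavity J h σ x + q x * sp (σ x))

/-- auxiliary: single-site transition probability. -/
noncomputable def pp [Fintype V] (J : V → V → ℝ) (h : V → ℝ) (β : ℝ) (q : V → ℝ)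
    (σ : V → Bool) (x : V) (b : Bool) : ℝ :=
  Real.exp (aa J h β q σ x * sp b) / (2 * Real.cosh (aa J h β q σ x))

lemma Psca_eq_prod [Fintype V] (J : V → V → ℝ) (h : V → ℝ) (β : ℝ) (q : V → ℝ)
    (σ τ : V → Bool) : Psca J h β q σ τ = ∏ x, pp J h β q σ x (τ x) := rfl

lemma pp_pos [Fintype V] (J : V → V → ℝ) (h : V → ℝ) (β : ℝ) (q : V → ℝ)
    (σ : V → Bool) (x : V) (b : Bool) : 0 < pp J h β q σ x b := by
  unfold pp
  positivity

lemma pp_sum [Fintype V] (J : V → V → ℝ) (h : V → ℝ) (β : ℝ) (q : V → ℝ)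
    (σ : V → Bool) (x : V) : pp J h β q σ x true + pp J h β q σ x false = 1 := by
  unfold pp sp
  have hc := Real.cosh_pos (aa J h β q σ x)
  rw [Real.cosh_eq] at hc ⊢
  field_simp
  simp

lemma pp_true [Fintype V] (J : V → V → ℝ) (h : V → ℝ) (β : ℝ) (q : V → ℝ)
    (σ : V → Bool) (x : V) :
    pp J h β q σ x true = (1 + Real.tanh (aa J h β q σ x)) / 2 := by
  unfold pp sp
  have hc := Real.cosh_pos (aa J h β q σ x)
  rw [Real.tanh_eq_sinh_div_cosh]
  field_simp
  simp only [if_true, mul_one]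
  nlinarith [Real.cosh_add_sinh (aa J h β q σ x)]

/-- oscillation of `f` at coordinate `x`. -/
noncomputable def osc' [Fintype V] [DecidableEq V] (f : (V → Bool) → ℝ) (x : V) : ℝ :=
  Finset.sup' Finset.univ Finset.univ_nonempty
    (fun ρ : V → Bool => |f (Function.update ρ x true) - f (Function.update ρ x false)|)

lemma osc'_nonneg [Fintype V] [DecidableEq V] (f : (V → Bool) → ℝ) (x : V) :
    0 ≤ osc' f x := by
  obtain ⟨ρ⟩ : Nonempty (V → Bool) := inferInstance
  exact le_trans (abs_nonneg _)
    (Finset.le_sup'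
      (fun ρ : V → Bool => |f (Function.update ρ x true) - f (Function.update ρ x false)|)
      (Finset.mem_univ ρ))

lemma osc'_le [Fintype V] [DecidableEq V] (f : (V → Bool) → ℝ) (y : V) (ρ : V → Bool)
    (b b' : Bool) : |f (Function.update ρ y b) - f (Function.update ρ y b')| ≤ osc' f y := by
  cases b <;> cases b'
  · simpa using osc'_nonneg f y
  · rw [abs_sub_comm]
    exact Finset.le_sup'
      (fun ρ : V → Bool => |f (Function.update ρ y true) - f (Function.update ρ y false)|)
      (Finset.mem_univ ρ)
  · exact Finset.le_sup'
      (fun ρ : V → Bool => |f (Function.update ρ y true) - f (Function.update ρ y false)|)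
      (Finset.mem_univ ρ)
  · simpa using osc'_nonneg f y

lemma diff_le_sum_osc [Fintype V] [DecidableEq V] (f : (V → Bool) → ℝ) (S : Finset V) :
    ∀ σ τ : V → Bool, (∀ x ∉ S, σ x = τ x) → |f σ - f τ| ≤ ∑ x ∈ S, osc' f x := by
  induction S using Finset.induction_on with
  | empty =>
    intro σ τ hst
    have : σ = τ := funext fun x => hst x (by simp)
    simp [this]
  | insert y S' hy ih =>
    intro σ τ hst
    set σ' := Function.update σ y (τ y) with hσ'
    have h1 : |f σ - f σ'| ≤ osc' f y := by
      have : σ = Function.update σ y (σ y) := (Function.update_eq_self y σ).symm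
      rw [this] at *
      simpa [hσ', Function.update_idem] using osc'_le f y σ (σ y) (τ y)
    have h2 : |f σ' - f τ| ≤ ∑ x ∈ S', osc' f x := by
      apply ih
      intro x hx
      by_cases hxy : x = y
      · subst hxy; simp [hσ']
      · rw [hσ', Function.update_of_ne hxy]
        exact hst x (by simp [hxy, hx])
    calc |f σ - f τ| ≤ |f σ - f σ'| + |f σ' - f τ| := abs_sub_le _ _ _
      _ ≤ osc' f y + ∑ x ∈ S', osc' f x := add_le_add h1 h2
      _ = ∑ x ∈ insert y S', osc' f x := (Finset.sum_insert hy).symm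

lemma swap_bound [Fintype V] [DecidableEq V] (w : V → Bool → ℝ)
    (hw0 : ∀ x b, 0 ≤ w x b) (hw1 : ∀ x, w x true + w x false = 1)
    (u v : Bool → ℝ) (hu : u true + u false = 1) (hv : v true + v false = 1)
    (y : V) (g : (V → Bool) → ℝ) :
    |(∑ η : V → Bool, (∏ x ∈ Finset.univ.erase y, w x (η x)) * u (η y) * g η) -
      ∑ η : V → Bool, (∏ x ∈ Finset.univ.erase y, w x (η x)) * v (η y) * g η| ≤
      |u true - v true| * osc' g y := by
  set A : (V → Bool) → ℝ := fun η => ∏ x ∈ Finset.univ.erase y, w x (η x) with hA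
  have hA0 : ∀ η, 0 ≤ A η := fun η => Finset.prod_nonneg fun x _ => hw0 x (η x)
  set d : Bool → ℝ := fun b => u b - v b with hd
  have hdf : d false = -d true := by simp only [hd]; linarith
  have habs : ∀ b, |d b| = |d true| := by
    intro b; cases b
    · rw [hdf, abs_neg]
    · rfl
  have hdiff : (∑ η : V → Bool, A η * u (η y) * g η) - ∑ η : V → Bool, A η * v (η y) * g η
      = ∑ η : V → Bool, A η * d (η y) * g η := by
    rw [← Finset.sum_sub_distrib]
    exact Finset.sum_congr rfl fun η _ => by simp only [hd]; ring
  rw [hdiff]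
  set φ : (V → Bool) → (V → Bool) := fun η => Function.update η y (!η y) with hφ
  have hφy : ∀ η, φ η y = !η y := fun η => Function.update_self y _ η
  have hφx : ∀ η x, x ≠ y → φ η x = η x := fun η x hx => Function.update_of_ne hx _ η
  have hinv : Function.Involutive φ := by
    intro η
    funext x
    by_cases hx : x = y
    · subst hx; simp [hφ]
    · rw [hφx _ x hx, hφx _ x hx]
  have hAφ : ∀ η, A (φ η) = A η := by
    intro η
    apply Finset.prod_congr rfl
    intro x hx
    rw [hφx _ x (Finset.ne_of_mem_erase hx)]
  have hdφ : ∀ η, d (φ η y) = -(d (η y)) := by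
    intro η
    rw [hφy]
    cases hη : η y
    · simp [hdf]
    · simp [hdf]
  have hsum2 : (∑ η : V → Bool, A η * d (η y) * g η)
      = ∑ η : V → Bool, A η * (-(d (η y))) * g (φ η) := by
    have := Fintype.sum_bijective φ hinv.bijective
      (fun η => A (φ η) * d (φ η y) * g (φ η)) (fun η => A η * d (η y) * g η)
      (fun η => rfl)
    rw [← this]
    refine Finset.sum_congr rfl fun η _ => ?_
    show A (φ η) * d (φ η y) * g (φ η) = A η * (-(d (η y))) * g (φ η)
    rw [hAφ, hdφ]
  have h2T : (2:ℝ) * ∑ η : V → Bool, A η * d (η y) * g η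
      = ∑ η : V → Bool, A η * d (η y) * (g η - g (φ η)) := by
    rw [two_mul]
    nth_rewrite 2 [hsum2]
    rw [← Finset.sum_add_distrib]
    exact Finset.sum_congr rfl fun η _ => by ring
  have hgφ : ∀ η, |g η - g (φ η)| ≤ osc' g y := by
    intro η
    have h1 : η = Function.update η y (η y) := (Function.update_eq_self y η).symm
    calc |g η - g (φ η)| = |g (Function.update η y (η y)) - g (Function.update η y (!η y))| := by
          rw [← h1]
      _ ≤ osc' g y := osc'_le g y η (η y) (!η y)
  have hAsum : (∑ η : V → Bool, A η) = 2 := by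
    have hW : ∀ η : V → Bool, (∏ x, (if x = y then (1:ℝ) else w x (η x))) = A η := by
      intro η
      calc (∏ x, (if x = y then (1:ℝ) else w x (η x)))
          = (if y = y then (1:ℝ) else w y (η y)) *
              ∏ x ∈ Finset.univ.erase y, (if x = y then (1:ℝ) else w x (η x)) :=
            (Finset.mul_prod_erase Finset.univ _ (Finset.mem_univ y)).symm
        _ = ∏ x ∈ Finset.univ.erase y, w x (η x) := by
            rw [if_pos rfl, one_mul]
            exact Finset.prod_congr rfl fun x hx => if_neg (Finset.ne_of_mem_erase hx)
    have hps := Finset.prod_univ_sum (fun _ : V => (Finset.univ : Finset Bool))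
      (fun x b => if x = y then (1:ℝ) else w x b)
    rw [Fintype.piFinset_univ] at hps
    have hbool : ∀ x : V, (∑ b : Bool, (if x = y then (1:ℝ) else w x b))
        = if x = y then (2:ℝ) else 1 := by
      intro x
      by_cases hx : x = y
      · simp [hx]
      · simp only [Fintype.sum_bool, if_neg hx]
        exact hw1 x
    calc (∑ η : V → Bool, A η)
        = ∑ η : V → Bool, ∏ x, (if x = y then (1:ℝ) else w x (η x)) :=
          (Finset.sum_congr rfl fun η _ => (hW η).symm)
      _ = ∏ x, ∑ b : Bool, (if x = y then (1:ℝ) else w x b) := hps.symm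
      _ = ∏ x, (if x = y then (2:ℝ) else 1) := Finset.prod_congr rfl fun x _ => hbool x
      _ = 2 := by rw [Finset.prod_ite_eq' Finset.univ y (fun _ => (2:ℝ))]; simp
  have hT : |∑ η : V → Bool, A η * d (η y) * g η| ≤ |d true| * osc' g y := by
    have habs2 : |(2:ℝ) * ∑ η : V → Bool, A η * d (η y) * g η|
        ≤ ∑ η : V → Bool, A η * (|d true| * osc' g y) := by
      rw [h2T]
      refine le_trans (Finset.abs_sum_le_sum_abs _ _) (Finset.sum_le_sum fun η _ => ?_)
      rw [abs_mul, abs_mul, abs_of_nonneg (hA0 η), habs]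
      rw [mul_assoc]
      apply mul_le_mul_of_nonneg_left _ (hA0 η)
      exact mul_le_mul_of_nonneg_left (hgφ η) (abs_nonneg _)
    rw [← Finset.sum_mul, hAsum, abs_mul, abs_two] at habs2
    linarith [habs2]
  exact hT

/-- Telescoping bound for a product kernel: `p σ x ·` and `p τ x ·` probability vectors. -/
lemma tele_bound [Fintype V] [DecidableEq V] (p : (V → Bool) → V → Bool → ℝ)
    (hp0 : ∀ σ x b, 0 ≤ p σ x b) (hp1 : ∀ σ x, p σ x true + p σ x false = 1)
    (σ τ : V → Bool) (g : (V → Bool) → ℝ) :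
    |(∑ η : V → Bool, (∏ x, p σ x (η x)) * g η) - ∑ η : V → Bool, (∏ x, p τ x (η x)) * g η| ≤
      ∑ x, |p σ x true - p τ x true| * osc' g x := by
  set F : Finset V → ℝ := fun S =>
    ∑ η : V → Bool, (∏ x, (if x ∈ S then p σ x (η x) else p τ x (η x))) * g η with hF
  have key : ∀ S : Finset V, |F S - F ∅| ≤ ∑ x ∈ S, |p σ x true - p τ x true| * osc' g x := by
    intro S
    induction S using Finset.induction_on with
    | empty => simp
    | insert y S' hy ih =>
      have hstep : |F (insert y S') - F S'| ≤ |p σ y true - p τ y true| * osc' g y := by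
        set w : V → Bool → ℝ := fun x b => if x ∈ S' then p σ x b else p τ x b with hw
        have hw0 : ∀ x b, 0 ≤ w x b := by
          intro x b; rw [hw]; dsimp only; split <;> [exact hp0 σ x b; exact hp0 τ x b]
        have hw1 : ∀ x, w x true + w x false = 1 := by
          intro x; rw [hw]; dsimp only; split <;> [exact hp1 σ x; exact hp1 τ x]
        have e1 : F (insert y S') = ∑ η : V → Bool,
            (∏ x ∈ Finset.univ.erase y, w x (η x)) * (p σ y) (η y) * g η := by
          rw [hF]
          refine Finset.sum_congr rfl fun η _ => ?_
          have : (∏ x, (if x ∈ insert y S' then p σ x (η x) else p τ x (η x)))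
              = (if y ∈ insert y S' then p σ y (η y) else p τ y (η y)) *
                ∏ x ∈ Finset.univ.erase y,
                  (if x ∈ insert y S' then p σ x (η x) else p τ x (η x)) :=
            (Finset.mul_prod_erase Finset.univ _ (Finset.mem_univ y)).symm
          rw [this, if_pos (Finset.mem_insert_self y S')]
          have : (∏ x ∈ Finset.univ.erase y, (if x ∈ insert y S' then p σ x (η x) else p τ x (η x)))
              = ∏ x ∈ Finset.univ.erase y, w x (η x) := by
            refine Finset.prod_congr rfl fun x hx => ?_
            simp [hw, Finset.mem_insert, Finset.ne_of_mem_erase hx]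
          rw [this]; ring
        have e2 : F S' = ∑ η : V → Bool,
            (∏ x ∈ Finset.univ.erase y, w x (η x)) * (p τ y) (η y) * g η := by
          rw [hF]
          refine Finset.sum_congr rfl fun η _ => ?_
          have : (∏ x, (if x ∈ S' then p σ x (η x) else p τ x (η x)))
              = (if y ∈ S' then p σ y (η y) else p τ y (η y)) *
                ∏ x ∈ Finset.univ.erase y, (if x ∈ S' then p σ x (η x) else p τ x (η x)) :=
            (Finset.mul_prod_erase Finset.univ _ (Finset.mem_univ y)).symm
          rw [this, if_neg hy]
          ring
        rw [e1, e2]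
        exact swap_bound w hw0 hw1 (p σ y) (p τ y) (hp1 σ y) (hp1 τ y) y g
      calc |F (insert y S') - F ∅| ≤ |F (insert y S') - F S'| + |F S' - F ∅| := abs_sub_le _ _ _
        _ ≤ |p σ y true - p τ y true| * osc' g y +
              ∑ x ∈ S', |p σ x true - p τ x true| * osc' g x := add_le_add hstep ih
        _ = ∑ x ∈ insert y S', |p σ x true - p τ x true| * osc' g x :=
            (Finset.sum_insert (f := fun x => |p σ x true - p τ x true| * osc' g x) hy).symm
  have hFuniv : F Finset.univ = ∑ η : V → Bool, (∏ x, p σ x (η x)) * g η := by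
    rw [hF]; simp
  have hFempty : F ∅ = ∑ η : V → Bool, (∏ x, p τ x (η x)) * g η := by
    rw [hF]; simp
  have := key Finset.univ
  rw [hFuniv, hFempty] at this
  exact this

lemma cbound [Fintype V] [DecidableEq V] (J : V → V → ℝ) (h : V → ℝ) (β : ℝ) (q : V → ℝ)
    (hβ : 0 ≤ β) (hq : ∀ x, 0 ≤ q x) (ρ : V → Bool) (y x : V) :
    |pp J h β q (Function.update ρ y true) x true - pp J h β q (Function.update ρ y false) x true|
      ≤ Real.tanh (β * |J x y| / 2) + (if x = y then Real.tanh (β * q x / 2) else 0) := by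
  set σ := Function.update ρ y true with hσ
  set τ := Function.update ρ y false with hτ
  set A := aa J h β q σ x with hA
  set B := aa J h β q τ x with hB
  have hpp : pp J h β q σ x true - pp J h β q τ x true = (Real.tanh A - Real.tanh B) / 2 := by
    rw [pp_true, pp_true]; ring
  have hstep1 : |pp J h β q σ x true - pp J h β q τ x true| ≤ Real.tanh (|A - B| / 2) := by
    rw [hpp, abs_div, abs_two]
    linarith [mytanh_diff A B]
  have hsum : (∑ z, J x z * sp (σ z)) - ∑ z, J x z * sp (τ z) = 2 * J x y := by
    rw [← Finset.sum_sub_distrib, Finset.sum_eq_single y]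
    · simp [hσ, hτ, sp, Function.update_self]; ring
    · intro z _ hz
      rw [hσ, hτ, Function.update_of_ne hz, Function.update_of_ne hz, sub_self]
    · simp
  by_cases hxy : x = y
  · subst hxy
    have hAB : A - B = β * J x x + β * q x := by
      rw [hA, hB]
      unfold aa cavity
      have h1 : sp (σ x) - sp (τ x) = 2 := by
        simp [hσ, hτ, sp, Function.update_self]; norm_num
      have h2 : (∑ z, J x z * sp (σ z)) - ∑ z, J x z * sp (τ z) = 2 * J x x := hsum
      linear_combination (β / 2) * h2 + (β * q x / 2) * h1
    have habs : |A - B| / 2 ≤ β * |J x x| / 2 + β * q x / 2 := by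
      rw [hAB]
      have := abs_add_le (β * J x x) (β * q x)
      rw [abs_mul, abs_mul, abs_of_nonneg hβ, abs_of_nonneg (hq x)] at this
      linarith
    calc |pp J h β q σ x true - pp J h β q τ x true| ≤ Real.tanh (|A - B| / 2) := hstep1
      _ ≤ Real.tanh (β * |J x x| / 2 + β * q x / 2) := mytanh_mono habs
      _ ≤ Real.tanh (β * |J x x| / 2) + Real.tanh (β * q x / 2) :=
          mytanh_subadd (div_nonneg (mul_nonneg hβ (abs_nonneg _)) (by norm_num))
            (div_nonneg (mul_nonneg hβ (hq x)) (by norm_num))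
      _ = Real.tanh (β * |J x x| / 2) + (if x = x then Real.tanh (β * q x / 2) else 0) := by
          rw [if_pos rfl]
  · have hAB : A - B = β * J x y := by
      rw [hA, hB]
      unfold aa cavity
      have h1 : sp (σ x) - sp (τ x) = 0 := by
        rw [hσ, hτ, Function.update_of_ne hxy, Function.update_of_ne hxy, sub_self]
      linear_combination (β / 2) * hsum + (β * q x / 2) * h1
    have habs : |A - B| / 2 ≤ β * |J x y| / 2 := by
      rw [hAB, abs_mul, abs_of_nonneg hβ]
    calc |pp J h β q σ x true - pp J h β q τ x true| ≤ Real.tanh (|A - B| / 2) := hstep1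
      _ ≤ Real.tanh (β * |J x y| / 2) := mytanh_mono habs
      _ ≤ Real.tanh (β * |J x y| / 2) + (if x = y then Real.tanh (β * q x / 2) else 0) := by
          rw [if_neg hxy]; simp

section main
variable [Fintype V] [DecidableEq V] [Nonempty V]

/-- max oscillation -/
noncomputable def Mosc (f : (V → Bool) → ℝ) : ℝ :=
  Finset.sup' Finset.univ Finset.univ_nonempty (osc' f)

lemma Mosc_nonneg (f : (V → Bool) → ℝ) : 0 ≤ Mosc f :=
  le_trans (osc'_nonneg f (Classical.arbitrary V)) (Finset.le_sup' _ (Finset.mem_univ _))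

lemma osc_le_Mosc (f : (V → Bool) → ℝ) (x : V) : osc' f x ≤ Mosc f :=
  Finset.le_sup' _ (Finset.mem_univ x)

lemma rowsum (J : V → V → ℝ) (β : ℝ) (q : V → ℝ) (hsym : ∀ x y, J x y = J y x)
    (r : ℝ)
    (hr : r = Finset.univ.sup' Finset.univ_nonempty
        (fun x => Real.tanh (β * q x / 2) + ∑ y, Real.tanh (β * |J x y| / 2))) (y : V) :
    (∑ x, (Real.tanh (β * |J x y| / 2) + if x = y then Real.tanh (β * q x / 2) else 0)) ≤ r := by
  have h1 : (∑ x, (Real.tanh (β * |J x y| / 2) + if x = y then Real.tanh (β * q x / 2) else 0))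
      = (∑ x, Real.tanh (β * |J y x| / 2)) + Real.tanh (β * q y / 2) := by
    rw [Finset.sum_add_distrib, Finset.sum_ite_eq' Finset.univ y
      (fun x => Real.tanh (β * q x / 2)), if_pos (Finset.mem_univ y)]
    congr 1
    exact Finset.sum_congr rfl fun x _ => by rw [hsym x y]
  rw [h1]
  have h2 : Real.tanh (β * q y / 2) + ∑ x, Real.tanh (β * |J y x| / 2) ≤ r := by
    rw [hr]
    exact Finset.le_sup'
      (fun x => Real.tanh (β * q x / 2) + ∑ z, Real.tanh (β * |J x z| / 2)) (Finset.mem_univ y)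
  linarith

lemma onestep_bound (J : V → V → ℝ) (h : V → ℝ) (β : ℝ) (q : V → ℝ)
    (hβ : 0 ≤ β) (hq : ∀ x, 0 ≤ q x) (hsym : ∀ x y, J x y = J y x) (r : ℝ)
    (hr : r = Finset.univ.sup' Finset.univ_nonempty
        (fun x => Real.tanh (β * q x / 2) + ∑ y, Real.tanh (β * |J x y| / 2)))
    (g : (V → Bool) → ℝ) :
    Mosc (fun ρ => ∑ η, Psca J h β q ρ η * g η) ≤ r * Mosc g := by
  apply Finset.sup'_le
  intro y _
  apply Finset.sup'_le
  intro ρ _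
  set σ := Function.update ρ y true
  set τ := Function.update ρ y false
  have htele := tele_bound (pp J h β q) (fun σ x b => (pp_pos J h β q σ x b).le)
    (fun σ x => pp_sum J h β q σ x) σ τ g
  have hrw : ∀ ζ : V → Bool, (∑ η : V → Bool, Psca J h β q ζ η * g η)
      = ∑ η : V → Bool, (∏ x, pp J h β q ζ x (η x)) * g η := by
    intro ζ
    exact Finset.sum_congr rfl fun η _ => by rw [Psca_eq_prod]
  have hb : ∀ x : V, |pp J h β q σ x true - pp J h β q τ x true| * osc' g x
      ≤ (Real.tanh (β * |J x y| / 2) + if x = y then Real.tanh (β * q x / 2) else 0) * Mosc g := by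
    intro x
    apply mul_le_mul (cbound J h β q hβ hq ρ y x) (osc_le_Mosc g x) (osc'_nonneg g x)
    calc (0:ℝ) ≤ |pp J h β q σ x true - pp J h β q τ x true| := abs_nonneg _
      _ ≤ _ := cbound J h β q hβ hq ρ y x
  calc |(fun ρ => ∑ η, Psca J h β q ρ η * g η) (Function.update ρ y true) -
        (fun ρ => ∑ η, Psca J h β q ρ η * g η) (Function.update ρ y false)|
      = |(∑ η : V → Bool, (∏ x, pp J h β q σ x (η x)) * g η) -
          ∑ η : V → Bool, (∏ x, pp J h β q τ x (η x)) * g η| := by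
        dsimp only; rw [hrw σ, hrw τ]
    _ ≤ ∑ x, |pp J h β q σ x true - pp J h β q τ x true| * osc' g x := htele
    _ ≤ ∑ x, (Real.tanh (β * |J x y| / 2) + if x = y then Real.tanh (β * q x / 2) else 0) *
          Mosc g := Finset.sum_le_sum fun x _ => hb x
    _ = (∑ x, (Real.tanh (β * |J x y| / 2) + if x = y then Real.tanh (β * q x / 2) else 0)) *
          Mosc g := (Finset.sum_mul _ _ _).symm
    _ ≤ r * Mosc g := mul_le_mul_of_nonneg_right (rowsum J β q hsym r hr y) (Mosc_nonneg g)


end main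

/-- with `r = max_x (tanh(β q_x/2) + ∑_y tanh(β|J_{x,y}|/2)) < 1`, for all
σ, τ and every t ∈ ℕ, `‖(P^{SCA}_{β,q})^t(σ,·) − (P^{SCA}_{β,q})^t(τ,·)‖_TV ≤ r^t · |V|`. -/
theorem SCA_tv_contraction [Fintype V] [DecidableEq V] [Nonempty V]
    (G : SimpleGraph V) (J : V → V → ℝ) (h : V → ℝ)
    (hsym : ∀ x y, J x y = J y x)
    (hJG : ∀ x y, ¬ G.Adj x y → J x y = 0)
    (β : ℝ) (hβ : 0 ≤ β) (q : V → ℝ) (hq : ∀ x, 0 ≤ q x)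
    (r : ℝ)
    (hr : r = univ.sup' univ_nonempty
        (fun x => Real.tanh (β * q x / 2) + ∑ y, Real.tanh (β * |J x y| / 2)))
    (hr1 : r < 1)
    (σ τ : V → Bool) (t : ℕ) :
    tvDist (kpow (Psca J h β q) t σ) (kpow (Psca J h β q) t τ) ≤ r ^ t * (Fintype.card V : ℝ) := by
  set P := Psca J h β q with hP
  -- r is nonnegative
  have hr0 : 0 ≤ r := by
    rw [hr]
    refine le_trans ?_ (Finset.le_sup'
      (fun x => Real.tanh (β * q x / 2) + ∑ y, Real.tanh (β * |J x y| / 2))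
      (Finset.mem_univ (Classical.arbitrary V)))
    have h1 : 0 ≤ Real.tanh (β * q (Classical.arbitrary V) / 2) :=
      mytanh_nonneg (div_nonneg (mul_nonneg hβ (hq _)) (by norm_num))
    have h2 : 0 ≤ ∑ y, Real.tanh (β * |J (Classical.arbitrary V) y| / 2) :=
      Finset.sum_nonneg fun y _ =>
        mytanh_nonneg (div_nonneg (mul_nonneg hβ (abs_nonneg _)) (by norm_num))
    linarith
  -- the t-step averaging operator
  set PT : ℕ → ((V → Bool) → ℝ) → (V → Bool) → ℝ :=
    fun t f ζ => ∑ η, kpow P t ζ η * f η with hPT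
  have hPT0 : ∀ f ζ, PT 0 f ζ = f ζ := by
    intro f ζ
    rw [hPT]
    dsimp only
    show (∑ η : V → Bool, (if ζ = η then (1:ℝ) else 0) * f η) = f ζ
    rw [Finset.sum_eq_single ζ]
    · rw [if_pos rfl, one_mul]
    · intro η _ hη; rw [if_neg fun hc => hη hc.symm, zero_mul]
    · intro hζ; exact absurd (Finset.mem_univ ζ) hζ
  have hPTsucc : ∀ n f ζ, PT (n + 1) f ζ = ∑ η, P ζ η * PT n f η := by
    intro n f ζ
    rw [hPT]
    dsimp only
    show (∑ ξ : V → Bool, (∑ η, P ζ η * kpow P n η ξ) * f ξ) = _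
    calc (∑ ξ : V → Bool, (∑ η, P ζ η * kpow P n η ξ) * f ξ)
        = ∑ ξ : V → Bool, ∑ η : V → Bool, P ζ η * kpow P n η ξ * f ξ := by
          exact Finset.sum_congr rfl fun ξ _ => Finset.sum_mul _ _ _
      _ = ∑ η : V → Bool, ∑ ξ : V → Bool, P ζ η * kpow P n η ξ * f ξ := Finset.sum_comm
      _ = ∑ η : V → Bool, P ζ η * ∑ ξ : V → Bool, kpow P n η ξ * f ξ := by
          refine Finset.sum_congr rfl fun η _ => ?_
          rw [Finset.mul_sum]
          exact Finset.sum_congr rfl fun ξ _ => (mul_assoc _ _ _)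
  -- contraction of max oscillation
  have hMain : ∀ (n : ℕ) (f : (V → Bool) → ℝ), Mosc (PT n f) ≤ r ^ n * Mosc f := by
    intro n
    induction n with
    | zero =>
      intro f
      have : PT 0 f = f := funext fun ζ => hPT0 f ζ
      rw [this, pow_zero, one_mul]
    | succ n ih =>
      intro f
      have heq : PT (n + 1) f = fun ζ => ∑ η, P ζ η * PT n f η :=
        funext fun ζ => hPTsucc n f ζ
      rw [heq]
      calc Mosc (fun ζ => ∑ η, P ζ η * PT n f η) ≤ r * Mosc (PT n f) :=
            onestep_bound J h β q hβ hq hsym r hr (PT n f)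
        _ ≤ r * (r ^ n * Mosc f) := mul_le_mul_of_nonneg_left (ih f) hr0
        _ = r ^ (n + 1) * Mosc f := by ring
  -- choose the sign function
  set f : (V → Bool) → ℝ :=
    fun η => if 0 ≤ kpow P t σ η - kpow P t τ η then (1:ℝ) else -1 with hf
  have hfabs : ∀ η, |kpow P t σ η - kpow P t τ η| = (kpow P t σ η - kpow P t τ η) * f η := by
    intro η
    rw [hf]
    dsimp only
    by_cases hpos : 0 ≤ kpow P t σ η - kpow P t τ η
    · rw [if_pos hpos, mul_one, abs_of_nonneg hpos]
    · rw [if_neg hpos, abs_of_neg (lt_of_not_ge hpos)]; ring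
  have hf1 : ∀ η, |f η| ≤ 1 := by
    intro η
    rw [hf]
    dsimp only
    split <;> simp
  have hMf : Mosc f ≤ 2 := by
    apply Finset.sup'_le
    intro x _
    apply Finset.sup'_le
    intro ρ _
    calc |f (Function.update ρ x true) - f (Function.update ρ x false)|
        ≤ |f (Function.update ρ x true)| + |f (Function.update ρ x false)| := abs_sub _ _
      _ ≤ 1 + 1 := add_le_add (hf1 _) (hf1 _)
      _ = 2 := by norm_num
  -- total variation as a difference of expectations
  have hTV : tvDist (kpow P t σ) (kpow P t τ) = (1 / 2) * (PT t f σ - PT t f τ) := by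
    unfold tvDist
    congr 1
    calc (∑ η : V → Bool, |kpow P t σ η - kpow P t τ η|)
        = ∑ η : V → Bool, ((kpow P t σ η - kpow P t τ η) * f η) :=
          Finset.sum_congr rfl fun η _ => hfabs η
      _ = (∑ η : V → Bool, kpow P t σ η * f η) - ∑ η : V → Bool, kpow P t τ η * f η := by
          rw [← Finset.sum_sub_distrib]
          exact Finset.sum_congr rfl fun η _ => by ring
      _ = PT t f σ - PT t f τ := rfl
  have hdiff : PT t f σ - PT t f τ ≤ (Fintype.card V : ℝ) * (r ^ t * 2) := by
    have h1 : |PT t f σ - PT t f τ| ≤ ∑ x, osc' (PT t f) x :=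
      diff_le_sum_osc (PT t f) Finset.univ σ τ (fun x hx => absurd (Finset.mem_univ x) hx)
    have h2 : (∑ x, osc' (PT t f) x) ≤ (Fintype.card V : ℝ) * (r ^ t * 2) := by
      have h3 : ∀ x ∈ Finset.univ, osc' (PT t f) x ≤ r ^ t * 2 := by
        intro x _
        calc osc' (PT t f) x ≤ Mosc (PT t f) := osc_le_Mosc (PT t f) x
          _ ≤ r ^ t * Mosc f := hMain t f
          _ ≤ r ^ t * 2 := mul_le_mul_of_nonneg_left hMf (by positivity)
      calc (∑ x, osc' (PT t f) x) ≤ Finset.univ.card • (r ^ t * 2) :=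
            Finset.sum_le_card_nsmul Finset.univ _ _ h3
        _ = (Fintype.card V : ℝ) * (r ^ t * 2) := by
            rw [Finset.card_univ, nsmul_eq_mul]
    exact le_trans (le_trans (le_abs_self _) h1) h2
  rw [hTV]
  linarith [hdiff]
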